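/- For every integer n ≥ 3, Φ(n) ≡ 0 (mod 3). -/

import Mathlib

/-- `Phi n` is the number of nonempty subsets of `{1, ..., n}` relatively prime to `n`. -/
def Phi (n : ℕ) : ℕ :=
  ((Finset.Icc 1 n).powerset.filter fun A => A.Nonempty ∧ (insert n A).gcd id = 1).card

open Finset
open scoped ArithmeticFunction
open scoped ArithmeticFunction.Moebius

lemma sum_moeb (k : ℕ) : ∑ d ∈ k.divisors, μ d = if k = 1 then 1 else 0 := by
  rcases eq_or_ne k 0 with rfl | hk
  · simp
  · have := congrArg (fun f : ArithmeticFunction ℤ => f k) ArithmeticFunction.moebius_mul_coe_zeta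
    simp only [ArithmeticFunction.mul_apply, ArithmeticFunction.one_apply] at this
    rw [Nat.sum_divisorsAntidiagonal (fun a b => μ a * ((ArithmeticFunction.zeta : ArithmeticFunction ℕ) : ArithmeticFunction ℤ) b)] at this
    rw [← this]
    apply Finset.sum_congr rfl
    intro d hd
    rw [Nat.mem_divisors] at hd
    have hd0 : d ≠ 0 := fun h => hk (by simpa [h] using hd.1)
    have h2 : k / d ≠ 0 :=
      Nat.div_ne_zero_iff.2 ⟨hd0, Nat.le_of_dvd (Nat.pos_of_ne_zero hk) hd.1⟩
    simp [ArithmeticFunction.natCoe_apply, ArithmeticFunction.zeta_apply, h2]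

lemma card_mult (n d : ℕ) :
    (((Finset.Icc 1 n).powerset.filter fun A => A.Nonempty ∧ ∀ a ∈ A, d ∣ a)).card
      = 2 ^ (n / d) - 1 := by
  classical
  set M : Finset ℕ := (Finset.Icc 1 n).filter (fun x => d ∣ x) with hM
  have hset : ((Finset.Icc 1 n).powerset.filter fun A => A.Nonempty ∧ ∀ a ∈ A, d ∣ a)
      = M.powerset.erase ∅ := by
    ext A
    simp only [Finset.mem_filter, Finset.mem_powerset, Finset.mem_erase, hM,
      Finset.subset_iff, Finset.mem_filter, Finset.nonempty_iff_ne_empty]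
    exact ⟨fun ⟨hs, hne, hdvd⟩ => ⟨hne, fun x hx => ⟨hs hx, hdvd x hx⟩⟩,
      fun ⟨hne, h⟩ => ⟨fun x hx => (h hx).1, hne, fun x hx => (h hx).2⟩⟩
  rw [hset, Finset.card_erase_of_mem (Finset.empty_mem_powerset _), Finset.card_powerset]
  congr 1
  rw [hM]
  have : Finset.Icc 1 n = Finset.Ioc 0 n := by rw [← Finset.Icc_add_one_left_eq_Ioc, zero_add]
  rw [this, Nat.Ioc_filter_dvd_card_eq_div]

lemma phi_eq (n : ℕ) (hn : n ≠ 0) :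
    (Phi n : ℤ) = ∑ d ∈ n.divisors, (μ d : ℤ) * (2 ^ (n / d) - 1) := by
  classical
  set T := (Finset.Icc 1 n).powerset.filter (fun A => A.Nonempty) with hT
  have step1 : Phi n = ∑ A ∈ T, if (insert n A).gcd id = 1 then 1 else 0 := by
    rw [Phi, ← Finset.filter_filter, ← hT, Finset.card_filter]
  have step2 : (Phi n : ℤ) = ∑ A ∈ T, if (insert n A).gcd id = 1 then (1 : ℤ) else 0 := by
    rw [step1]; push_cast [apply_ite (Nat.cast : ℕ → ℤ)]; rfl
  have step3 : ∀ A ∈ T, (if (insert n A).gcd id = 1 then (1 : ℤ) else 0)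
      = ∑ d ∈ n.divisors, if (∀ a ∈ A, d ∣ a) then (μ d : ℤ) else 0 := by
    intro A hA
    have hgne : (insert n A).gcd id ≠ 0 := by
      intro h
      exact hn (Finset.gcd_eq_zero_iff.1 h n (Finset.mem_insert_self n A))
    have hg : ((insert n A).gcd id).divisors
        = n.divisors.filter (fun d => ∀ a ∈ A, d ∣ a) := by
      ext d
      simp only [Nat.mem_divisors, Finset.mem_filter, Finset.dvd_gcd_iff,
        Finset.forall_mem_insert, id]
      tauto
    rw [← sum_moeb ((insert n A).gcd id), hg, Finset.sum_filter]
  rw [step2, Finset.sum_congr rfl step3, Finset.sum_comm]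
  apply Finset.sum_congr rfl
  intro d hd
  rw [← Finset.sum_filter, Finset.sum_const, Finset.filter_filter,
    card_mult, nsmul_eq_mul, Nat.cast_sub Nat.one_le_two_pow]
  push_cast
  ring

def oddInd : ArithmeticFunction ℤ := ⟨fun k => if Odd k then 1 else 0, by norm_num⟩

lemma oddInd_apply (k : ℕ) : oddInd k = if Odd k then 1 else 0 := rfl

lemma oddInd_mult : oddInd.IsMultiplicative := by
  constructor
  · simp [oddInd_apply]
  · intro m n _
    simp only [oddInd_apply, Nat.odd_mul]
    by_cases h1 : Odd m <;> by_cases h2 : Odd n <;> simp [h1, h2]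

lemma muh_eq (k : ℕ) :
    (μ * oddInd : ArithmeticFunction ℤ) k = ∑ d ∈ k.divisors, μ d * oddInd (k / d) := by
  rw [ArithmeticFunction.mul_apply, Nat.sum_divisorsAntidiagonal (fun a b => μ a * oddInd b)]

lemma muh_odd (m : ℕ) (hm : Odd m) :
    (μ * oddInd : ArithmeticFunction ℤ) m = if m = 1 then 1 else 0 := by
  rw [muh_eq, ← sum_moeb m]
  apply Finset.sum_congr rfl
  intro d hd
  rw [Nat.mem_divisors] at hd
  have hodd : Odd (m / d) := by
    rcases Nat.even_or_odd (m / d) with h | h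
    · have h2 : (2 : ℕ) ∣ m := dvd_trans (even_iff_two_dvd.mp h) (Nat.div_dvd_of_dvd hd.1)
      exact absurd (even_iff_two_dvd.mpr h2) (Nat.not_even_iff_odd.mpr hm)
    · exact h
  rw [oddInd_apply, if_pos hodd, mul_one]

lemma muh_two_pow (v : ℕ) :
    (μ * oddInd : ArithmeticFunction ℤ) (2 ^ v) = μ (2 ^ v) := by
  rw [muh_eq, Nat.sum_divisors_prime_pow Nat.prime_two]
  have : ∀ i ∈ Finset.range (v + 1),
      μ (2 ^ i) * oddInd (2 ^ v / 2 ^ i) = if i = v then μ (2 ^ v) else 0 := by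
    intro i hi
    rw [Finset.mem_range] at hi
    have hiv : i ≤ v := by omega
    rw [Nat.pow_div hiv (by norm_num), oddInd_apply]
    by_cases h : i = v
    · subst h; simp
    · have hne : ¬ Odd (2 ^ (v - i)) := by
        have hdvd : (2 : ℕ) ∣ 2 ^ (v - i) := dvd_pow_self 2 (by omega)
        rw [Nat.odd_iff]
        omega
      rw [if_neg hne, if_neg h, mul_zero]
  rw [Finset.sum_congr rfl this, Finset.sum_ite_eq' (Finset.range (v + 1)) v]
  simp

lemma muh_zero (n : ℕ) (hn : 3 ≤ n) : (μ * oddInd : ArithmeticFunction ℤ) n = 0 := by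
  have hn0 : n ≠ 0 := by omega
  rcases Nat.even_or_odd n with he | ho
  · set v := n.factorization 2 with hv
    set m := n / 2 ^ v with hm
    have hd : 2 ^ v * m = n := Nat.ordProj_mul_ordCompl_eq_self n 2
    have hcop : Nat.Coprime (2 ^ v) m :=
      Nat.Coprime.pow_left _ (Nat.coprime_ordCompl Nat.prime_two hn0)
    have hmul := (ArithmeticFunction.isMultiplicative_moebius.mul oddInd_mult).map_mul_of_coprime hcop
    rw [hd] at hmul
    have hmodd : Odd m := by
      have h2 : ¬ (2 : ℕ) ∣ m := by
        simpa [hm, hv] using Nat.not_dvd_ordCompl Nat.prime_two hn0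
      rw [Nat.odd_iff]
      omega
    by_cases hm1 : m = 1
    · have hv2 : 2 ≤ v := by
        by_contra hv2
        interval_cases v <;> omega
      have hnsq : ¬ Squarefree (2 ^ v) := by
        intro hsq
        have : IsUnit 2 := hsq 2 (by
          have : (2:ℕ) ^ 2 ∣ 2 ^ v := pow_dvd_pow 2 hv2
          simpa [pow_two] using this)
        simp [Nat.isUnit_iff] at this
      rw [hmul, muh_two_pow, ArithmeticFunction.moebius_eq_zero_of_not_squarefree hnsq,
        zero_mul]
    · rw [hmul, muh_odd m hmodd, if_neg hm1, mul_zero]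
  · rw [muh_odd n ho, if_neg (by omega)]

lemma sum_mu_negone (n : ℕ) (hn : 3 ≤ n) :
    ∑ d ∈ n.divisors, μ d * (-1 : ℤ) ^ (n / d) = 0 := by
  have h1 : ∀ k : ℕ, (-1 : ℤ) ^ k = 1 - 2 * oddInd k := by
    intro k
    rcases Nat.even_or_odd k with h | h
    · simp [oddInd_apply, Nat.not_odd_iff_even.mpr h, h.neg_one_pow]
    · simp [oddInd_apply, h, h.neg_one_pow]
  have h2 : ∀ d ∈ n.divisors, μ d * (-1 : ℤ) ^ (n / d)
      = μ d - 2 * (μ d * oddInd (n / d)) := by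
    intro d _
    rw [h1]
    ring
  rw [Finset.sum_congr rfl h2, Finset.sum_sub_distrib, ← Finset.mul_sum, ← muh_eq,
    muh_zero n hn, sum_moeb n, if_neg (by omega), mul_zero, sub_zero]

/-- Ayad–Kihel: `Φ(n) ≡ 0 (mod 3)` for every `n ≥ 3`. -/
theorem Phi_mod_three (n : ℕ) (hn : 3 ≤ n) : Phi n % 3 = 0 := by
  have hn0 : n ≠ 0 := by omega
  have key : (3 : ℤ) ∣ (Phi n : ℤ) := by
    have hsplit : ∀ d ∈ n.divisors, (μ d : ℤ) * (2 ^ (n / d) - 1)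
        = μ d * ((2 : ℤ) ^ (n / d) - (-1) ^ (n / d))
          + μ d * (-1 : ℤ) ^ (n / d) - μ d := by
      intro d _
      ring
    rw [phi_eq n hn0, Finset.sum_congr rfl hsplit, Finset.sum_sub_distrib,
      Finset.sum_add_distrib, sum_mu_negone n hn, sum_moeb n, if_neg (by omega),
      add_zero, sub_zero]
    apply Finset.dvd_sum
    intro d hd
    apply Dvd.dvd.mul_left
    have hmod : ((-1 : ℤ)) ≡ 2 [ZMOD 3] := by decide
    exact (hmod.pow (n / d)).dvd
  have : (3 : ℕ) ∣ Phi n := by exact_mod_cast key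
  omega
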